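/- arXiv:1701.01357 — 3 statements merged into one kernel-verified Lean document; each statement's English description precedes it below -/
import Mathlib

section
/- Let n be a prime number, S ⊆ {1, …, ⌊n/2⌋}, G = C_n(S), and let k ≥ 1 be an integer such that G has at least one independent set of cardinality k + 1. Define the simple graph H on vertex set ℤ/nℤ in which distinct u, v are adjacent if and only if there exists an independent set A of G with |A| = k + 1 and u, v ∈ A. Then H is connected. (H is the 1-skeleton of the pure complex Δ^{[k]} spanned by the k-dimensional faces of the independence complex of G.) -/
/-- The circulant graph `C_n(S)`: vertices `ZMod n`, with distinct `i, j` adjacent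
iff `|i - j|_n = min ((i-j).val, n - (i-j).val) ∈ S`. -/
def circulant (n : ℕ) (S : Finset ℕ) : SimpleGraph (ZMod n) where
  Adj i j := i ≠ j ∧ min ((i - j).val) (n - (i - j).val) ∈ S
  symm := ⟨by
    rintro i j ⟨hne, hmem⟩
    refine ⟨hne.symm, ?_⟩
    rcases Nat.eq_zero_or_pos n with rfl | hn
    · simpa using hmem
    · haveI : NeZero n := ⟨hn.ne'⟩
      have h1 : j - i = -(i - j) := by ring
      have h0 : i - j ≠ 0 := sub_ne_zero.mpr hne
      rw [h1, ZMod.neg_val, if_neg h0,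
        Nat.sub_sub_self (le_of_lt (ZMod.val_lt _)), min_comm]
      exact hmem⟩
  loopless := ⟨fun i h => h.1 rfl⟩

/-- `Nk n S k` is the number of independent sets of cardinality `k`
in the circulant graph `C_n(S)`. -/
noncomputable def Nk (n : ℕ) (S : Finset ℕ) (k : ℕ) : ℕ :=
  {A : Finset (ZMod n) | A.card = k ∧ ∀ u ∈ A, ∀ v ∈ A, ¬ (circulant n S).Adj u v}.ncard

/-- The 1-skeleton of the pure complex `Δ^{[k]}` spanned by the `k`-dimensional faces of
the independence complex of `C_n(S)`: distinct `u, v` are adjacent iff some independent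
set of `C_n(S)` of cardinality `k + 1` contains both. -/
def skel (n : ℕ) (S : Finset ℕ) (k : ℕ) : SimpleGraph (ZMod n) where
  Adj u v := u ≠ v ∧ ∃ A : Finset (ZMod n), A.card = k + 1 ∧
    (∀ x ∈ A, ∀ y ∈ A, ¬ (circulant n S).Adj x y) ∧ u ∈ A ∧ v ∈ A
  symm := ⟨by
    rintro u v ⟨hne, A, h1, h2, h3, h4⟩
    exact ⟨hne.symm, A, h1, h2, h4, h3⟩⟩
  loopless := ⟨fun u h => h.1 rfl⟩

/-- For `n` prime and `k ≥ 1`, if `C_n(S)` has an independent set of cardinality `k + 1`,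
then the 1-skeleton of `Δ^{[k]}` is connected. -/
theorem stmt7 (n : ℕ) (hp : n.Prime) (S : Finset ℕ) (hS : S ⊆ Finset.Icc 1 (n / 2))
    (k : ℕ) (hk : 1 ≤ k)
    (hex : ∃ A : Finset (ZMod n), A.card = k + 1 ∧
      ∀ x ∈ A, ∀ y ∈ A, ¬ (circulant n S).Adj x y) :
    (skel n S k).Connected := by
  haveI : Fact n.Prime := ⟨hp⟩
  obtain ⟨A, hcard, hind⟩ := hex
  have h2 : 1 < A.card := by omega
  obtain ⟨u, hu, v, hv, huv⟩ := Finset.one_lt_card.mp h2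
  set d : ZMod n := v - u with hd_def
  have hd : d ≠ 0 := sub_ne_zero.mpr huv.symm
  have hshift : ∀ a b c : ZMod n,
      (circulant n S).Adj (a + c) (b + c) ↔ (circulant n S).Adj a b := by
    intro a b c
    show ((a + c ≠ b + c) ∧ _) ↔ ((a ≠ b) ∧ _)
    rw [add_sub_add_right_eq_sub]
    simp
  have hstep : ∀ x : ZMod n, (skel n S k).Adj x (x + d) := by
    intro x
    refine ⟨fun h => hd (left_eq_add.mp h), A.image (· + (x - u)), ?_, ?_, ?_, ?_⟩
    · rw [Finset.card_image_of_injective _ (add_left_injective _), hcard]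
    · intro y hy z hz
      obtain ⟨a, ha, rfl⟩ := Finset.mem_image.mp hy
      obtain ⟨b, hb, rfl⟩ := Finset.mem_image.mp hz
      rw [hshift]
      exact hind a ha b hb
    · exact Finset.mem_image.mpr ⟨u, hu, by ring⟩
    · exact Finset.mem_image.mpr ⟨v, hv, by rw [hd_def]; ring⟩
  have hreach : ∀ (a : ZMod n) (m : ℕ), (skel n S k).Reachable a (a + (m : ZMod n) * d) := by
    intro a m
    induction m with
    | zero => simpa using SimpleGraph.Reachable.refl a
    | succ m ih =>
      refine ih.trans ?_
      have := (hstep (a + (m : ZMod n) * d)).reachable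
      have he : a + (m : ZMod n) * d + d = a + ((m + 1 : ℕ) : ZMod n) * d := by
        push_cast; ring
      rwa [he] at this
  refine ⟨fun a b => ?_⟩
  set t : ZMod n := (b - a) * d⁻¹ with ht_def
  have ht : ((t.val : ZMod n)) = t := ZMod.natCast_rightInverse t
  have hb : a + (t.val : ZMod n) * d = b := by
    rw [ht, ht_def, mul_assoc, inv_mul_cancel₀ hd, mul_one]
    ring
  have := hreach a t.val
  rwa [hb] at this
end

section
/- Let n ≥ 2, S ⊆ {1, …, ⌊n/2⌋}, G = C_n(S), and S̄ = {1, …, ⌊n/2⌋} \ S. The following are equivalent: (1) the complement graph of G (which equals C_n(S̄)) is connected, and G has no independent set of cardinality 3 (equivalently, the independence complex Δ(G) is connected of dimension 1); (2) gcd(n, S̄) = 1 (the gcd of n together with the elements of S̄ is 1) and for all a, b ∈ S̄ one has b − a ∉ S̄ and n − (b + a) ∉ S̄. -/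
namespace CircAux


lemma adj_iff {n : ℕ} {T : Finset ℕ} {u v : ZMod n} :
    (circulant n T).Adj u v ↔ u ≠ v ∧ min ((u - v).val) (n - (u - v).val) ∈ T := Iff.rfl

lemma minDist_mem_Icc {n : ℕ} (hn : 2 ≤ n) {u v : ZMod n} (h : u ≠ v) :
    min ((u - v).val) (n - (u - v).val) ∈ Finset.Icc 1 (n / 2) := by
  haveI : NeZero n := ⟨by omega⟩
  have h0 : u - v ≠ 0 := sub_ne_zero.mpr h
  have h1 : (u - v).val ≠ 0 := fun hc => h0 ((ZMod.val_eq_zero _).mp hc)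
  have h2 : (u - v).val < n := ZMod.val_lt _
  simp only [Finset.mem_Icc]
  omega

lemma cast_sub_val {n : ℕ} [NeZero n] {p q : ℕ} (hp : p < n) (hq : q ≤ p) :
    (((p : ZMod n) - (q : ZMod n)).val) = p - q := by
  rw [← Nat.cast_sub hq, ZMod.val_natCast, Nat.mod_eq_of_lt (by omega)]

lemma nonadj_of_mem_compl {n : ℕ} {S : Finset ℕ} {u v : ZMod n}
    (h : min ((u - v).val) (n - (u - v).val) ∉ S) : ¬ (circulant n S).Adj u v :=
  fun hadj => h hadj.2

lemma indep3 {n : ℕ} {S : Finset ℕ} (u v w : ZMod n) (huv : u ≠ v) (huw : u ≠ w)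
    (hvw : v ≠ w) (h1 : ¬ (circulant n S).Adj u v) (h2 : ¬ (circulant n S).Adj u w)
    (h3 : ¬ (circulant n S).Adj v w) :
    ∃ A : Finset (ZMod n), A.card = 3 ∧ ∀ a ∈ A, ∀ b ∈ A, ¬ (circulant n S).Adj a b := by
  classical
  refine ⟨{u, v, w}, Finset.card_eq_three.mpr ⟨u, v, w, huv, huw, hvw, rfl⟩, ?_⟩
  intro a ha b hb
  simp only [Finset.mem_insert, Finset.mem_singleton] at ha hb
  rcases ha with rfl | rfl | rfl <;> rcases hb with rfl | rfl | rfl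
  · exact (circulant n S).irrefl
  · exact h1
  · exact h2
  · exact fun h => h1 h.symm
  · exact (circulant n S).irrefl
  · exact h3
  · exact fun h => h2 h.symm
  · exact fun h => h3 h.symm
  · exact (circulant n S).irrefl

lemma triangle_iff {n : ℕ} (hn : 2 ≤ n) {S : Finset ℕ} (hS : S ⊆ Finset.Icc 1 (n / 2)) :
    (∃ A : Finset (ZMod n), A.card = 3 ∧ ∀ u ∈ A, ∀ v ∈ A, ¬ (circulant n S).Adj u v) ↔
    (∃ a ∈ Finset.Icc 1 (n / 2) \ S, ∃ b ∈ Finset.Icc 1 (n / 2) \ S,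
      (b - a ∈ Finset.Icc 1 (n / 2) \ S ∨ n - (b + a) ∈ Finset.Icc 1 (n / 2) \ S)) := by
  haveI : NeZero n := ⟨by omega⟩
  set T := Finset.Icc 1 (n / 2) \ S with hT
  have memT : ∀ {u v : ZMod n}, u ≠ v → ¬ (circulant n S).Adj u v →
      min ((u - v).val) (n - (u - v).val) ∈ T := by
    intro u v hne hna
    rw [hT, Finset.mem_sdiff]
    exact ⟨minDist_mem_Icc hn hne, fun hs => hna ⟨hne, hs⟩⟩
  have Tfacts : ∀ {t : ℕ}, t ∈ T → 1 ≤ t ∧ t ≤ n / 2 := by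
    intro t ht
    rw [hT, Finset.mem_sdiff, Finset.mem_Icc] at ht
    exact ht.1
  constructor
  · rintro ⟨A, hA3, hind⟩
    obtain ⟨u, v, w, huv, huw, hvw, rfl⟩ := Finset.card_eq_three.mp hA3
    have hmu : u ∈ ({u, v, w} : Finset (ZMod n)) := by simp
    have hmv : v ∈ ({u, v, w} : Finset (ZMod n)) := by simp
    have hmw : w ∈ ({u, v, w} : Finset (ZMod n)) := by simp
    set x := v - u with hx
    set y := w - u with hy
    have hxne : x ≠ 0 := sub_ne_zero.mpr (Ne.symm huv)
    have hyne : y ≠ 0 := sub_ne_zero.mpr (Ne.symm huw)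
    have hxy : x ≠ y := fun h => hvw (by
      have := congrArg (fun z => z + u) h
      simpa [hx, hy, sub_add_cancel] using this)
    set p := x.val with hp
    set q := y.val with hq
    set r := (x - y).val with hr
    have hp1 : 1 ≤ p := Nat.pos_of_ne_zero (fun hc => hxne ((ZMod.val_eq_zero _).mp hc))
    have hpn : p < n := ZMod.val_lt _
    have hq1 : 1 ≤ q := Nat.pos_of_ne_zero (fun hc => hyne ((ZMod.val_eq_zero _).mp hc))
    have hqn : q < n := ZMod.val_lt _
    have hr1 : 1 ≤ r := Nat.pos_of_ne_zero (fun hc =>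
      (sub_ne_zero.mpr hxy) ((ZMod.val_eq_zero _).mp hc))
    have hrn : r < n := ZMod.val_lt _
    have ha : min p (n - p) ∈ T := by
      have := memT (Ne.symm huv) (hind v hmv u hmu)
      rwa [show v - u = x from rfl] at this
    have hb : min q (n - q) ∈ T := by
      have := memT (Ne.symm huw) (hind w hmw u hmu)
      rwa [show w - u = y from rfl] at this
    have hc : min r (n - r) ∈ T := by
      have := memT hvw (hind v hmv w hmw)
      have hvw' : v - w = x - y := by rw [hx, hy]; ring
      rwa [hvw'] at this
    -- express r via p, q
    have hxcast : x = (p : ZMod n) := (ZMod.natCast_zmod_val x).symm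
    have hycast : y = (q : ZMod n) := (ZMod.natCast_zmod_val y).symm
    have hxy_cast : x - y = ((p + (n - q) : ℕ) : ZMod n) := by
      rw [hxcast, hycast]
      push_cast [Nat.cast_sub hqn.le]
      rw [ZMod.natCast_self]
      ring
    have hrval : r = (p + (n - q)) % n := by
      rw [hr, hxy_cast, ZMod.val_natCast]
    have hrd : r = (p + (n - q)) - n ∨ r = p + (n - q) := by
      rcases lt_or_ge (p + (n - q)) n with h | h
      · right; rw [hrval, Nat.mod_eq_of_lt h]
      · left
        rw [hrval, Nat.mod_eq_sub_mod h, Nat.mod_eq_of_lt (by omega)]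
    set a := min p (n - p) with ha_def
    set b := min q (n - q) with hb_def
    set c := min r (n - r) with hc_def
    have key : c = b - a ∨ c = a - b ∨ c = a + b ∨ c = n - (a + b) := by omega
    rcases key with h | h | h | h
    · exact ⟨a, ha, b, hb, Or.inl (h ▸ hc)⟩
    · exact ⟨b, hb, a, ha, Or.inl (h ▸ hc)⟩
    · refine ⟨a, ha, c, hc, Or.inl ?_⟩
      have : c - a = b := by omega
      rw [this]; exact hb
    · refine ⟨a, ha, b, hb, Or.inr ?_⟩
      have : n - (b + a) = c := by omega
      rw [this]; exact hc
  · rintro ⟨a, ha, b, hb, hcase⟩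
    obtain ⟨ha1, ha2⟩ := Tfacts ha
    obtain ⟨hb1, hb2⟩ := Tfacts hb
    have han : a < n := by omega
    have hbn : b < n := by omega
    have hMem : ∀ {t : ℕ}, t ∈ T → t ∉ S := by
      intro t ht; rw [hT, Finset.mem_sdiff] at ht; exact ht.2
    have hvala : ((a : ZMod n)).val = a := ZMod.val_cast_of_lt han
    have hvalb : ((b : ZMod n)).val = b := ZMod.val_cast_of_lt hbn
    rcases hcase with hc | hc
    · -- c = b - a ∈ T : vertices 0, a, b
      obtain ⟨hc1, hc2⟩ := Tfacts hc
      have hab : a < b := by omega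
      have h0a : (0 : ZMod n) ≠ (a : ZMod n) := fun h => by
        have := congrArg ZMod.val h; rw [hvala, ZMod.val_zero] at this; omega
      have h0b : (0 : ZMod n) ≠ (b : ZMod n) := fun h => by
        have := congrArg ZMod.val h; rw [hvalb, ZMod.val_zero] at this; omega
      have hab' : (a : ZMod n) ≠ (b : ZMod n) := fun h => by
        have := congrArg ZMod.val h; rw [hvala, hvalb] at this; omega
      refine indep3 0 (a : ZMod n) (b : ZMod n) h0a h0b hab' ?_ ?_ ?_
      · refine fun h => nonadj_of_mem_compl ?_ h.symm
        rw [sub_zero, hvala]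
        have : min a (n - a) = a := by omega
        rw [this]; exact hMem ha
      · refine fun h => nonadj_of_mem_compl ?_ h.symm
        rw [sub_zero, hvalb]
        have : min b (n - b) = b := by omega
        rw [this]; exact hMem hb
      · refine fun h => nonadj_of_mem_compl ?_ h.symm
        rw [cast_sub_val hbn hab.le]
        have : min (b - a) (n - (b - a)) = b - a := by omega
        rw [this]; exact hMem hc
    · -- c = n - (b + a) ∈ T : vertices 0, a, n - b
      obtain ⟨hc1, hc2⟩ := Tfacts hc
      have habn : a + b < n := by omega
      have hnb1 : 1 ≤ n - b := by omega
      have hnbn : n - b < n := by omega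
      have hvalnb : (((n - b : ℕ) : ZMod n)).val = n - b := ZMod.val_cast_of_lt hnbn
      have h0a : (0 : ZMod n) ≠ (a : ZMod n) := fun h => by
        have := congrArg ZMod.val h; rw [hvala, ZMod.val_zero] at this; omega
      have h0nb : (0 : ZMod n) ≠ ((n - b : ℕ) : ZMod n) := fun h => by
        have := congrArg ZMod.val h; rw [hvalnb, ZMod.val_zero] at this; omega
      have hanb : (a : ZMod n) ≠ ((n - b : ℕ) : ZMod n) := fun h => by
        have := congrArg ZMod.val h; rw [hvala, hvalnb] at this; omega
      refine indep3 0 (a : ZMod n) ((n - b : ℕ) : ZMod n) h0a h0nb hanb ?_ ?_ ?_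
      · refine fun h => nonadj_of_mem_compl ?_ h.symm
        rw [sub_zero, hvala]
        have : min a (n - a) = a := by omega
        rw [this]; exact hMem ha
      · refine fun h => nonadj_of_mem_compl ?_ h.symm
        rw [sub_zero, hvalnb]
        have : min (n - b) (n - (n - b)) = b := by omega
        rw [this]; exact hMem hb
      · refine fun h => nonadj_of_mem_compl ?_ h.symm
        rw [cast_sub_val hnbn (by omega : a ≤ n - b)]
        have : min (n - b - a) (n - (n - b - a)) = n - (b + a) := by omega
        rw [this]; exact hMem hc


lemma compl_eq {n : ℕ} (hn : 2 ≤ n) (S : Finset ℕ) :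
    (circulant n S)ᶜ = circulant n (Finset.Icc 1 (n / 2) \ S) := by
  ext u v
  simp only [SimpleGraph.compl_adj, adj_iff, Finset.mem_sdiff]
  constructor
  · rintro ⟨hne, hnadj⟩
    exact ⟨hne, minDist_mem_Icc hn hne, fun hS' => hnadj ⟨hne, hS'⟩⟩
  · rintro ⟨hne, _, hns⟩
    exact ⟨hne, fun h => hns h.2⟩

/-- translation graph hom -/
def transHom (n : ℕ) (T : Finset ℕ) (c : ZMod n) : circulant n T →g circulant n T where
  toFun x := x + c
  map_rel' := by
    intro u v h
    refine ⟨fun he => h.1 (by simpa using he), ?_⟩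
    simpa [add_sub_add_right_eq_sub] using h.2

/-- negation graph hom -/
def negHom (n : ℕ) (T : Finset ℕ) : circulant n T →g circulant n T where
  toFun x := -x
  map_rel' := by
    intro u v h
    have h' := h.symm
    refine ⟨fun he => h.1 (neg_injective he), ?_⟩
    rw [neg_sub_neg]
    exact h'.2

/-- the reachable-from-0 subgroup -/
def reachSub (n : ℕ) (T : Finset ℕ) : AddSubgroup (ZMod n) where
  carrier := {v | (circulant n T).Reachable 0 v}
  zero_mem' := SimpleGraph.Reachable.refl 0
  add_mem' := by
    intro x y hx hy
    have h2 : (circulant n T).Reachable (0 + x) (y + x) := hy.map (transHom n T x)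
    rw [zero_add] at h2
    have := hx.trans h2
    rwa [add_comm y x] at this
  neg_mem' := by
    intro x hx
    have h2 : (circulant n T).Reachable (-0) (-x) := hx.map (negHom n T)
    rwa [neg_zero] at h2

lemma reachSub_carrier (n : ℕ) (T : Finset ℕ) (v : ZMod n) :
    v ∈ reachSub n T ↔ (circulant n T).Reachable 0 v := Iff.rfl

lemma natCast_mem_reachSub {n : ℕ} (hn : 2 ≤ n) {T : Finset ℕ}
    (hT : T ⊆ Finset.Icc 1 (n / 2)) {t : ℕ} (ht : t ∈ T) :
    (t : ZMod n) ∈ reachSub n T := by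
  haveI : NeZero n := ⟨by omega⟩
  have htI := hT ht
  rw [Finset.mem_Icc] at htI
  have hval : ((t : ZMod n)).val = t := ZMod.val_cast_of_lt (by omega)
  have hne : (t : ZMod n) ≠ 0 := by
    intro hc
    rw [hc] at hval
    simp [ZMod.val_zero] at hval
    omega
  have hadj : (circulant n T).Adj (t : ZMod n) 0 := by
    refine ⟨hne, ?_⟩
    rw [sub_zero, hval]
    have : min t (n - t) = t := by omega
    rwa [this]
  exact (hadj.symm).reachable

lemma gcd_natCast_mem {n : ℕ} (H : AddSubgroup (ZMod n)) {x y : ℕ}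
    (hx : (x : ZMod n) ∈ H) (hy : (y : ZMod n) ∈ H) :
    ((Nat.gcd x y : ℕ) : ZMod n) ∈ H := by
  have hb := Nat.gcd_eq_gcd_ab x y
  have : ((Nat.gcd x y : ℕ) : ZMod n) = (Nat.gcdA x y) • (x : ZMod n) + (Nat.gcdB x y) • (y : ZMod n) := by
    have := congrArg (fun z : ℤ => (z : ZMod n)) hb
    push_cast at this
    rw [this]
    simp [zsmul_eq_mul]
    ring
  rw [this]
  exact H.add_mem (H.zsmul_mem hx _) (H.zsmul_mem hy _)

lemma finset_gcd_mem {n : ℕ} (H : AddSubgroup (ZMod n)) (s : Finset ℕ)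
    (h : ∀ t ∈ s, (t : ZMod n) ∈ H) : ((s.gcd id : ℕ) : ZMod n) ∈ H := by
  classical
  induction s using Finset.induction with
  | empty => simpa using H.zero_mem
  | insert a s' hni ih =>
    rw [Finset.gcd_insert]
    have ha : (a : ZMod n) ∈ H := h a (Finset.mem_insert_self a s')
    have hs : ((s'.gcd id : ℕ) : ZMod n) ∈ H := ih (fun t ht => h t (Finset.mem_insert_of_mem ht))
    have : GCDMonoid.gcd (id a) (s'.gcd id) = Nat.gcd a (s'.gcd id) := rfl
    rw [this]
    exact gcd_natCast_mem H ha hs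

lemma connected_iff {n : ℕ} (hn : 2 ≤ n) {T : Finset ℕ} (hT : T ⊆ Finset.Icc 1 (n / 2)) :
    (circulant n T).Connected ↔ Nat.gcd n (T.gcd id) = 1 := by
  haveI : NeZero n := ⟨by omega⟩
  constructor
  · intro hc
    by_contra hd
    set d := Nat.gcd n (T.gcd id) with hd_def
    have hdn : d ∣ n := Nat.gcd_dvd_left _ _
    have hd1 : 1 ≤ d := Nat.pos_of_ne_zero (by
      intro h0
      have := Nat.eq_zero_of_gcd_eq_zero_left (hd_def ▸ h0)
      omega)
    have hd2 : 2 ≤ d := by omega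
    haveI : NeZero d := ⟨by omega⟩
    haveI : Fact (1 < d) := ⟨by omega⟩
    set φ := ZMod.castHom hdn (ZMod d) with hφ
    have step : ∀ u v : ZMod n, (circulant n T).Adj u v → φ u = φ v := by
      intro u v ⟨hne, hmem⟩
      have hdvd_t : d ∣ min ((u - v).val) (n - (u - v).val) :=
        dvd_trans (Nat.gcd_dvd_right _ _) (Finset.gcd_dvd hmem)
      have hvlt : (u - v).val < n := ZMod.val_lt _
      have hdval : d ∣ (u - v).val := by
        rcases min_cases ((u - v).val) (n - (u - v).val) with ⟨he, _⟩ | ⟨he, _⟩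
        · rwa [he] at hdvd_t
        · rw [he] at hdvd_t
          have : (u - v).val = n - (n - (u - v).val) := by omega
          rw [this]
          exact Nat.dvd_sub hdn hdvd_t
      have h1 : φ u - φ v = φ (u - v) := (map_sub φ u v).symm
      have h2 : φ (u - v) = (((u - v).val : ℕ) : ZMod d) := by
        conv_lhs => rw [← ZMod.natCast_zmod_val (u - v)]
        rw [map_natCast]
      have h3 : (((u - v).val : ℕ) : ZMod d) = 0 :=
        (ZMod.natCast_eq_zero_iff _ _).mpr hdval
      have : φ u - φ v = 0 := by rw [h1, h2, h3]
      linear_combination this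
    have key : ∀ u v : ZMod n, (circulant n T).Reachable u v → φ u = φ v := by
      intro u v h
      obtain ⟨w⟩ := h
      induction w with
      | nil => rfl
      | cons h p ih => exact (step _ _ h).trans ih
    have h01 := key 0 1 (hc.preconnected 0 1)
    rw [map_zero, map_one] at h01
    exact zero_ne_one h01
  · intro hg
    have hgm : ((T.gcd id : ℕ) : ZMod n) ∈ reachSub n T :=
      finset_gcd_mem _ _ (fun t ht => natCast_mem_reachSub hn hT ht)
    have hunit : IsUnit ((T.gcd id : ℕ) : ZMod n) := by
      rw [ZMod.isUnit_iff_coprime]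
      rwa [Nat.Coprime, Nat.gcd_comm]
    obtain ⟨u, hu⟩ := hunit
    have h1 : (1 : ZMod n) ∈ reachSub n T := by
      have : (1 : ZMod n) = (u⁻¹ : (ZMod n)ˣ).val.val • ((T.gcd id : ℕ) : ZMod n) := by
        rw [nsmul_eq_mul, ZMod.natCast_zmod_val]
        rw [← hu]
        simp [mul_comm]
      rw [this]
      exact (reachSub n T).nsmul_mem hgm _
    have hall : ∀ v : ZMod n, (circulant n T).Reachable 0 v := by
      intro v
      have : v ∈ reachSub n T := by
        have := (reachSub n T).nsmul_mem h1 v.val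
        rwa [nsmul_eq_mul, mul_one, ZMod.natCast_zmod_val] at this
      rwa [reachSub_carrier] at this
    haveI : Nonempty (ZMod n) := ⟨0⟩
    exact SimpleGraph.Connected.mk (fun u v => (hall u).symm.trans (hall v))


end CircAux

/-- Characterization of Cohen–Macaulay circulant graphs of Krull dimension 2:
the complement of `C_n(S)` is connected and `C_n(S)` has no independent 3-set
iff `gcd(n, S̄) = 1` and for all `a, b ∈ S̄` one has `b − a ∉ S̄` and `n − (b + a) ∉ S̄`. -/
theorem stmt12 (n : ℕ) (hn : 2 ≤ n) (S : Finset ℕ) (hS : S ⊆ Finset.Icc 1 (n / 2)) :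
    ((circulant n S)ᶜ.Connected ∧
      ¬ ∃ A : Finset (ZMod n), A.card = 3 ∧ ∀ u ∈ A, ∀ v ∈ A, ¬ (circulant n S).Adj u v)
    ↔
    (Nat.gcd n ((Finset.Icc 1 (n / 2) \ S).gcd id) = 1 ∧
      ∀ a ∈ Finset.Icc 1 (n / 2) \ S, ∀ b ∈ Finset.Icc 1 (n / 2) \ S,
        (b - a) ∉ Finset.Icc 1 (n / 2) \ S ∧ (n - (b + a)) ∉ Finset.Icc 1 (n / 2) \ S) := by
  classical
  rw [CircAux.compl_eq hn S,
    CircAux.connected_iff hn (Finset.sdiff_subset : Finset.Icc 1 (n / 2) \ S ⊆ _)]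
  refine and_congr Iff.rfl ?_
  constructor
  · intro hne a ha b hb
    exact ⟨fun h1 => hne ((CircAux.triangle_iff hn hS).mpr ⟨a, ha, b, hb, Or.inl h1⟩),
      fun h1 => hne ((CircAux.triangle_iff hn hS).mpr ⟨a, ha, b, hb, Or.inr h1⟩)⟩
  · intro hall hex
    obtain ⟨a, ha, b, hb, hor⟩ := (CircAux.triangle_iff hn hS).mp hex
    rcases hor with h1 | h1
    · exact (hall a ha b hb).1 h1
    · exact (hall a ha b hb).2 h1
end

section
/- Let n ≥ 4, S ⊆ {1, …, ⌊n/2⌋}, G = C_n(S), and S̄ = {1, …, ⌊n/2⌋} \ S. The following are equivalent: (1) the complement graph of G is connected, G has no independent set of cardinality 3, and N_2 = n, where N_2 is the number of independent 2-sets of G (i.e., G is Gorenstein of dimension 2, equivalently Cohen–Macaulay of dimension 2 with h_2 = N_2 − n + 1 = 1); (2) S̄ = {i} for some i with gcd(n, i) = 1, i.e., S = {1, …, ⌊n/2⌋} \ {i}; (3) the complement graph of G is isomorphic to the cycle graph on n vertices (an n-gon). -/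
namespace Stmt16Aux

open Finset

variable {n : ℕ}

/-- The circulant distance. -/
def md (n : ℕ) (x : ZMod n) : ℕ := min x.val (n - x.val)

lemma circulant_adj (D : Finset ℕ) (x y : ZMod n) :
    (circulant n D).Adj x y ↔ x ≠ y ∧ md n (x - y) ∈ D := Iff.rfl

instance (D : Finset ℕ) : DecidableRel (circulant n D).Adj :=
  fun x y => inferInstanceAs (Decidable (x ≠ y ∧ _ ∈ D))

instance (D : Finset ℕ) : DecidableRel (circulant n D)ᶜ.Adj :=
  fun x y => inferInstanceAs (Decidable (x ≠ y ∧ ¬ (circulant n D).Adj x y))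

section NeZero
variable [NeZero n]

lemma md_zero : md n (0 : ZMod n) = 0 := by simp [md]

lemma md_cast (d : ℕ) (h2 : d ≤ n / 2) : md n (d : ZMod n) = d := by
  have hn : 0 < n := NeZero.pos n
  have hdn : d < n := by omega
  rw [md, ZMod.val_cast_of_lt hdn]
  omega

lemma md_neg (x : ZMod n) : md n (-x) = md n x := by
  by_cases hx : x = 0
  · simp [hx]
  · have hv : x.val < n := ZMod.val_lt x
    rw [md, md, ZMod.neg_val, if_neg hx, Nat.sub_sub_self hv.le, min_comm]

lemma md_mem_Icc (x : ZMod n) (hx : x ≠ 0) : md n x ∈ Finset.Icc 1 (n / 2) := by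
  have hv : x.val < n := ZMod.val_lt x
  have hv1 : x.val ≠ 0 := fun h => hx ((ZMod.val_eq_zero x).mp h)
  simp only [md, Finset.mem_Icc]
  omega

lemma md_eq_iff (d : ℕ) (h1 : 1 ≤ d) (h2 : d ≤ n / 2) (x : ZMod n) :
    md n x = d ↔ x = (d : ZMod n) ∨ x = -(d : ZMod n) := by
  constructor
  · intro h
    have hv : x.val < n := ZMod.val_lt x
    have hx : ((x.val : ℕ) : ZMod n) = x := ZMod.natCast_rightInverse x
    rw [md] at h
    rcases le_or_gt x.val (n - x.val) with hle | hlt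
    · left
      rw [min_eq_left hle] at h
      rw [← hx, h]
    · right
      rw [min_eq_right hlt.le] at h
      have : x.val = n - d := by omega
      rw [← hx, this, Nat.cast_sub (by omega : d ≤ n), ZMod.natCast_self, zero_sub]
  · rintro (rfl | rfl)
    · exact md_cast d h2
    · rw [md_neg]; exact md_cast d h2

lemma compl_circulant (S : Finset ℕ) :
    (circulant n S)ᶜ = circulant n (Finset.Icc 1 (n / 2) \ S) := by
  ext x y
  rw [SimpleGraph.compl_adj, circulant_adj, circulant_adj]
  constructor
  · rintro ⟨hne, hnadj⟩
    refine ⟨hne, Finset.mem_sdiff.mpr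
      ⟨md_mem_Icc _ (sub_ne_zero.mpr hne), fun hmem => hnadj ⟨hne, hmem⟩⟩⟩
  · rintro ⟨hne, hmem⟩
    rw [Finset.mem_sdiff] at hmem
    exact ⟨hne, fun h => hmem.2 h.2⟩

lemma circulant_adj_iff (d : ℕ) (h1 : 1 ≤ d) (h2 : d ≤ n / 2) (x y : ZMod n) :
    (circulant n ({d} : Finset ℕ)).Adj x y ↔ x - y = (d : ZMod n) ∨ x - y = -(d : ZMod n) := by
  rw [circulant_adj]
  simp only [Finset.mem_singleton]
  constructor
  · rintro ⟨-, h⟩; exact (md_eq_iff d h1 h2 _).mp h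
  · intro h
    have hmd := (md_eq_iff d h1 h2 _).mpr h
    have hx0 : x - y ≠ 0 := by
      intro h0; rw [h0, md_zero] at hmd; omega
    exact ⟨sub_ne_zero.mp hx0, hmd⟩

lemma adj_iff_md (E : Finset ℕ) (hE : E ⊆ Finset.Icc 1 (n / 2)) (x y : ZMod n) :
    (circulant n E).Adj x y ↔ md n (x - y) ∈ E := by
  rw [circulant_adj]
  constructor
  · exact fun h => h.2
  · intro h
    refine ⟨?_, h⟩
    rintro rfl
    rw [sub_self, md_zero] at h
    have := Finset.mem_Icc.mp (hE h)
    omega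

lemma card_pairs_circ (E : Finset ℕ) (hE : E ⊆ Finset.Icc 1 (n / 2)) :
    (univ.filter fun p : ZMod n × ZMod n => (circulant n E).Adj p.1 p.2).card
      = n * (univ.filter fun x : ZMod n => md n x ∈ E).card := by
  have hfe : (univ.filter fun p : ZMod n × ZMod n => (circulant n E).Adj p.1 p.2)
      = (univ.filter fun p : ZMod n × ZMod n => md n (p.1 - p.2) ∈ E) := by
    refine Finset.filter_congr fun p _ => ?_
    exact adj_iff_md E hE p.1 p.2
  rw [hfe]
  rw [Finset.card_nbij' (i := fun p : ZMod n × ZMod n => ((p.1 - p.2, p.2) : ZMod n × ZMod n))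
      (j := fun q : ZMod n × ZMod n => (q.1 + q.2, q.2))
      (s := univ.filter fun p : ZMod n × ZMod n => md n (p.1 - p.2) ∈ E)
      (t := (univ.filter fun x : ZMod n => md n x ∈ E) ×ˢ univ) ?_ ?_ ?_ ?_]
  · rw [Finset.card_product, card_univ, ZMod.card, mul_comm]
  · intro p hp; simp only [mem_coe, mem_filter, mem_univ, true_and] at hp
    simp [hp]
  · intro q hq; simp only [mem_coe, mem_product, mem_filter, mem_univ, true_and] at hq
    simp [hq.1]
  · intro p _; simp
  · intro q _; simp

lemma card_md_fiber (d : ℕ) (h1 : 1 ≤ d) (h2 : d ≤ n / 2) :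
    (univ.filter fun x : ZMod n => md n x = d).card = if 2 * d = n then 1 else 2 := by
  have hset : univ.filter (fun x : ZMod n => md n x = d)
      = {(d : ZMod n), -(d : ZMod n)} := by
    ext x
    simp [md_eq_iff d h1 h2]
  rw [hset]
  by_cases h : 2 * d = n
  · have hdd : -(d : ZMod n) = (d : ZMod n) := by
      have : ((2 * d : ℕ) : ZMod n) = 0 := by rw [h, ZMod.natCast_self]
      push_cast at this
      linear_combination -this
    rw [if_pos h, hdd]
    simp
  · rw [if_neg h]
    have hne : (d : ZMod n) ≠ -(d : ZMod n) := by
      intro heq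
      have h2d : ((2 * d : ℕ) : ZMod n) = 0 := by push_cast; linear_combination heq
      have hdvd := (ZMod.natCast_eq_zero_iff _ n).mp h2d
      have := Nat.le_of_dvd (by omega) hdvd
      omega
    exact Finset.card_pair hne

lemma card_X (D : Finset ℕ) (hD : D ⊆ Finset.Icc 1 (n / 2)) :
    (univ.filter fun x : ZMod n => md n x ∈ D).card
      = ∑ d ∈ D, if 2 * d = n then 1 else 2 := by
  rw [Finset.card_eq_sum_card_fiberwise (f := md n) (s := univ.filter fun x : ZMod n => md n x ∈ D) (t := D)
    (fun x hx => (mem_filter.mp hx).2)]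
  refine Finset.sum_congr rfl fun d hd => ?_
  obtain ⟨hd1, hd2⟩ := mem_Icc.mp (hD hd)
  rw [← card_md_fiber d hd1 hd2]
  congr 1
  rw [Finset.filter_filter]
  refine Finset.filter_congr fun x _ => ?_
  constructor
  · rintro ⟨-, h⟩; exact h
  · intro h; exact ⟨h ▸ hd, h⟩

lemma c_eq_two_iff (D : Finset ℕ) (hD : D ⊆ Finset.Icc 1 (n / 2)) :
    (univ.filter fun x : ZMod n => md n x ∈ D).card = 2
      ↔ ∃ d, D = {d} ∧ 2 * d ≠ n := by
  rw [card_X D hD]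
  constructor
  · intro h
    have hne : D.Nonempty := by
      rcases D.eq_empty_or_nonempty with rfl | h'
      · simp at h
      · exact h'
    obtain ⟨d, hd⟩ := hne
    have hsingle : D = {d} := by
      by_contra hc
      obtain ⟨d', hd', hdd'⟩ : ∃ d' ∈ D, d' ≠ d := by
        by_contra h'
        push_neg at h'
        exact hc (Finset.eq_singleton_iff_unique_mem.mpr ⟨hd, h'⟩)
      have hsub : ({d, d'} : Finset ℕ) ⊆ D := by
        intro x hx
        rcases Finset.mem_insert.mp hx with rfl | hx
        · exact hd
        · exact Finset.mem_singleton.mp hx ▸ hd'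
      have hle : (∑ e ∈ ({d, d'} : Finset ℕ), if 2 * e = n then 1 else 2)
          ≤ ∑ e ∈ D, if 2 * e = n then 1 else 2 :=
        Finset.sum_le_sum_of_subset hsub
      rw [Finset.sum_pair hdd'.symm] at hle
      by_cases e1 : 2 * d = n <;> by_cases e2 : 2 * d' = n <;>
        simp only [e1, e2, if_pos, if_neg, if_true, if_false] at hle <;> omega
    refine ⟨d, hsingle, ?_⟩
    rw [hsingle, Finset.sum_singleton] at h
    by_cases e : 2 * d = n
    · rw [if_pos e] at h; omega
    · exact e
  · rintro ⟨d, rfl, hdn⟩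
    rw [Finset.sum_singleton, if_neg hdn]

lemma pair_eq {u v a b : ZMod n} (hne : a ≠ b) (h : ({a, b} : Finset (ZMod n)) = {u, v}) :
    (a = u ∧ b = v) ∨ (a = v ∧ b = u) := by
  have ha : a ∈ ({u, v} : Finset (ZMod n)) := h ▸ (by simp)
  have hb : b ∈ ({u, v} : Finset (ZMod n)) := h ▸ (by simp)
  simp only [mem_insert, mem_singleton] at ha hb
  rcases ha with rfl | rfl <;> rcases hb with rfl | rfl <;> tauto

lemma two_mul_N2 (S : Finset ℕ) :
    2 * Nk n S 2 = (univ.filter fun p : ZMod n × ZMod n =>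
      (circulant n S)ᶜ.Adj p.1 p.2).card := by
  classical
  set G := circulant n S with hG
  have hNk : Nk n S 2 = (univ.filter fun A : Finset (ZMod n) =>
      A.card = 2 ∧ ∀ u ∈ A, ∀ v ∈ A, ¬ G.Adj u v).card := by
    rw [Nk, Set.ncard_eq_toFinset_card']
    congr 1
    ext A
    simp [hG]
  rw [hNk]
  set F := univ.filter fun A : Finset (ZMod n) =>
      A.card = 2 ∧ ∀ u ∈ A, ∀ v ∈ A, ¬ G.Adj u v with hF
  have hmaps : ∀ p ∈ (univ.filter fun p : ZMod n × ZMod n => Gᶜ.Adj p.1 p.2),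
      ({p.1, p.2} : Finset (ZMod n)) ∈ F := by
    intro p hp
    rw [mem_filter] at hp
    obtain ⟨-, hadj⟩ := hp
    rw [SimpleGraph.compl_adj] at hadj
    rw [hF, mem_filter]
    refine ⟨mem_univ _, Finset.card_pair hadj.1, ?_⟩
    intro u hu v hv
    simp only [mem_insert, mem_singleton] at hu hv
    rcases hu with rfl | rfl <;> rcases hv with rfl | rfl
    · exact G.loopless.irrefl _
    · exact hadj.2
    · exact fun h => hadj.2 h.symm
    · exact G.loopless.irrefl _
  rw [Finset.card_eq_sum_card_fiberwise hmaps]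
  have hfib : ∀ A ∈ F, ((univ.filter fun p : ZMod n × ZMod n => Gᶜ.Adj p.1 p.2).filter
      fun p => ({p.1, p.2} : Finset (ZMod n)) = A).card = 2 := by
    intro A hA
    rw [hF, mem_filter] at hA
    obtain ⟨-, hcard, hindep⟩ := hA
    obtain ⟨u, v, huv, rfl⟩ := Finset.card_eq_two.mp hcard
    have hadjuv : Gᶜ.Adj u v := by
      rw [SimpleGraph.compl_adj]
      exact ⟨huv, hindep u (by simp) v (by simp)⟩
    have hset : ((univ.filter fun p : ZMod n × ZMod n => Gᶜ.Adj p.1 p.2).filter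
        fun p => ({p.1, p.2} : Finset (ZMod n)) = {u, v})
        = {((u, v) : ZMod n × ZMod n), (v, u)} := by
      ext ⟨a, b⟩
      simp only [mem_filter, mem_univ, true_and, mem_insert, mem_singleton, Prod.mk.injEq]
      constructor
      · rintro ⟨hadj, heq⟩
        exact (pair_eq hadj.ne heq).imp (fun h => h) (fun h => h)
      · rintro (⟨rfl, rfl⟩ | ⟨rfl, rfl⟩)
        · exact ⟨hadjuv, rfl⟩
        · exact ⟨hadjuv.symm, by rw [Finset.pair_comm]⟩
    rw [hset]
    rw [Finset.card_pair (by simp [Prod.ext_iff]; tauto)]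
  rw [Finset.sum_congr rfl hfib, Finset.sum_const, smul_eq_mul, mul_comm]

lemma two_mul_N2' (S : Finset ℕ) :
    2 * Nk n S 2
      = n * (univ.filter fun x : ZMod n =>
          md n x ∈ Finset.Icc 1 (n / 2) \ S).card := by
  rw [two_mul_N2 S, ← card_pairs_circ (Finset.Icc 1 (n / 2) \ S) Finset.sdiff_subset]
  congr 1
  refine Finset.filter_congr fun p _ => ?_
  rw [compl_circulant S]

lemma card_pairs_iso {G H : SimpleGraph (ZMod n)} [DecidableRel G.Adj] [DecidableRel H.Adj]
    (φ : G ≃g H) :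
    (univ.filter fun p : ZMod n × ZMod n => G.Adj p.1 p.2).card
      = (univ.filter fun p : ZMod n × ZMod n => H.Adj p.1 p.2).card := by
  refine Finset.card_nbij' (i := fun p : ZMod n × ZMod n => ((φ p.1, φ p.2) : ZMod n × ZMod n))
    (j := fun p : ZMod n × ZMod n => ((φ.symm p.1, φ.symm p.2) : ZMod n × ZMod n))
    ?_ ?_ ?_ ?_
  · intro p hp
    simp only [mem_coe, mem_filter, mem_univ, true_and] at hp ⊢
    exact φ.map_rel_iff.mpr hp
  · intro q hq
    simp only [mem_coe, mem_filter, mem_univ, true_and] at hq ⊢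
    exact φ.symm.map_rel_iff.mpr hq
  · intro p _; simp
  · intro q _; simp

lemma connected_circulant_one (hn : 4 ≤ n) : (circulant n ({1} : Finset ℕ)).Connected := by
  have h1 : (1 : ℕ) ≤ n / 2 := by omega
  have adj : ∀ k : ℕ, (circulant n ({1} : Finset ℕ)).Adj (k : ZMod n) ((k + 1 : ℕ) : ZMod n) := by
    intro k
    rw [circulant_adj_iff 1 le_rfl h1]
    right; push_cast; ring
  have hreach : ∀ k : ℕ, (circulant n ({1} : Finset ℕ)).Reachable 0 (k : ZMod n) := by
    intro k
    induction k with
    | zero => simpa using SimpleGraph.Reachable.refl (0 : ZMod n)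
    | succ k ih => exact ih.trans (adj k).reachable
  haveI : Nonempty (ZMod n) := ⟨0⟩
  constructor
  intro x y
  have hx := hreach x.val
  have hy := hreach y.val
  rw [ZMod.natCast_rightInverse x] at hx
  rw [ZMod.natCast_rightInverse y] at hy
  exact hx.symm.trans hy

lemma gcd_of_connected (d : ℕ) (h1 : 1 ≤ d) (h2 : d ≤ n / 2)
    (hc : (circulant n ({d} : Finset ℕ)).Connected) : Nat.gcd n d = 1 := by
  have key : ∀ x y : ZMod n, ∀ _ : (circulant n ({d} : Finset ℕ)).Walk x y,
      x - y ∈ AddSubgroup.zmultiples (d : ZMod n) := by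
    intro x y w
    induction w with
    | nil => rw [sub_self]; exact AddSubgroup.zero_mem _
    | @cons a b c hadj p ih =>
      have hd := (circulant_adj_iff d h1 h2 _ _).mp hadj
      have heq : a - c = (a - b) + (b - c) := by ring
      rw [heq]
      refine AddSubgroup.add_mem _ ?_ ih
      rcases hd with h | h
      · rw [h]; exact AddSubgroup.mem_zmultiples _
      · rw [h]; exact AddSubgroup.neg_mem _ (AddSubgroup.mem_zmultiples _)
  obtain ⟨w⟩ := hc.preconnected 0 1
  have h01 := key 0 1 w
  rw [zero_sub] at h01
  have h1m : (1 : ZMod n) ∈ AddSubgroup.zmultiples (d : ZMod n) := by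
    have := AddSubgroup.neg_mem _ h01
    simpa using this
  obtain ⟨k, hk⟩ := AddSubgroup.mem_zmultiples_iff.mp h1m
  have hcast : ((k * (d : ℤ) : ℤ) : ZMod n) = 1 := by
    rw [← hk]
    push_cast [zsmul_eq_mul]
    ring
  have hdvd : (n : ℤ) ∣ k * (d : ℤ) - 1 := by
    have : ((k * (d : ℤ) - 1 : ℤ) : ZMod n) = 0 := by push_cast; rw [← hcast]; push_cast; ring
    exact (ZMod.intCast_zmod_eq_zero_iff_dvd _ n).mp this
  have hg1 : ((Nat.gcd n d : ℕ) : ℤ) ∣ (n : ℤ) := Int.natCast_dvd_natCast.mpr (Nat.gcd_dvd_left n d)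
  have hg2 : ((Nat.gcd n d : ℕ) : ℤ) ∣ (d : ℤ) := Int.natCast_dvd_natCast.mpr (Nat.gcd_dvd_right n d)
  have hone : ((Nat.gcd n d : ℕ) : ℤ) ∣ 1 := by
    have h3 : ((Nat.gcd n d : ℕ) : ℤ) ∣ k * (d : ℤ) - (k * (d : ℤ) - 1) :=
      dvd_sub (hg2.mul_left k) (hg1.trans hdvd)
    simpa using h3
  have := Int.le_of_dvd one_pos hone
  have hpos : 0 < Nat.gcd n d := Nat.gcd_pos_of_pos_left d (NeZero.pos n)
  omega

lemma no_triangle (d : ℕ) (h1 : 1 ≤ d) (h2 : d ≤ n / 2) (h3 : ¬ (n ∣ 3 * d))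
    {a b c : ZMod n}
    (hab : (circulant n ({d} : Finset ℕ)).Adj a b)
    (hbc : (circulant n ({d} : Finset ℕ)).Adj b c)
    (hca : (circulant n ({d} : Finset ℕ)).Adj a c) : False := by
  rw [circulant_adj_iff d h1 h2] at hab hbc hca
  have hn : 0 < n := NeZero.pos n
  have hd0 : (d : ZMod n) ≠ 0 := by
    intro h
    have := (ZMod.natCast_eq_zero_iff d n).mp h
    have := Nat.le_of_dvd (by omega) this
    omega
  have h3d : (3 : ZMod n) * (d : ZMod n) ≠ 0 := by
    intro h
    refine h3 ((ZMod.natCast_eq_zero_iff _ n).mp ?_)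
    push_cast
    linear_combination h
  have hsum : a - c = (a - b) + (b - c) := by ring
  rcases hab with h | h <;> rcases hbc with h' | h' <;> rcases hca with h'' | h'' <;>
    rw [h'', h, h'] at hsum <;>
    first
      | exact hd0 (by linear_combination hsum)
      | exact hd0 (by linear_combination -hsum)
      | exact h3d (by linear_combination hsum)
      | exact h3d (by linear_combination -hsum)

lemma iso_circulant_one (d : ℕ) (h1 : 1 ≤ d) (h2 : d ≤ n / 2) (hg : Nat.gcd n d = 1)
    (hn : 4 ≤ n) :
    Nonempty (circulant n ({d} : Finset ℕ) ≃g circulant n ({1} : Finset ℕ)) := by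
  have hco : Nat.Coprime d n := Nat.coprime_comm.mp hg
  let u : (ZMod n)ˣ := ZMod.unitOfCoprime d hco
  have hu : (u : ZMod n) = (d : ZMod n) := ZMod.coe_unitOfCoprime d hco
  have key1 : ∀ z : ZMod n, z * ↑u⁻¹ = 1 ↔ z = (d : ZMod n) := by
    intro z; rw [Units.mul_inv_eq_one, hu]
  have key2 : ∀ z : ZMod n, z * ↑u⁻¹ = -1 ↔ z = -(d : ZMod n) := by
    intro z
    constructor
    · intro h
      have h2' : -z = (d : ZMod n) := (key1 _).mp (by rw [neg_mul, h, neg_neg])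
      rw [← h2', neg_neg]
    · intro h
      rw [h, neg_mul, (key1 (d : ZMod n)).mpr rfl]
  refine ⟨⟨Equiv.mk (fun x => x * ↑u⁻¹) (fun x => x * ↑u)
    (fun x => by simp) (fun x => by simp), ?_⟩⟩
  intro x y
  simp only [Equiv.coe_fn_mk]
  rw [circulant_adj_iff 1 le_rfl (by omega : 1 ≤ n / 2), circulant_adj_iff d h1 h2,
    ← sub_mul, Nat.cast_one]
  rw [key1, key2]

end NeZero
end Stmt16Aux

open Stmt16Aux Finset in
/-- Characterization of Gorenstein circulant graphs of dimension 2. -/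
theorem stmt16 (n : ℕ) (hn : 4 ≤ n) (S : Finset ℕ) (hS : S ⊆ Finset.Icc 1 (n / 2)) :
    (((circulant n S)ᶜ.Connected ∧
        (¬ ∃ A : Finset (ZMod n), A.card = 3 ∧
          ∀ u ∈ A, ∀ v ∈ A, ¬ (circulant n S).Adj u v) ∧
        Nk n S 2 = n)
      ↔ ∃ i : ℕ, Nat.gcd n i = 1 ∧ Finset.Icc 1 (n / 2) \ S = {i})
    ∧
    (((circulant n S)ᶜ.Connected ∧
        (¬ ∃ A : Finset (ZMod n), A.card = 3 ∧
          ∀ u ∈ A, ∀ v ∈ A, ¬ (circulant n S).Adj u v) ∧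
        Nk n S 2 = n)
      ↔ Nonempty ((circulant n S)ᶜ ≃g circulant n ({1} : Finset ℕ))) := by
  haveI : NeZero n := ⟨by omega⟩
  have hDsub : Finset.Icc 1 (n / 2) \ S ⊆ Finset.Icc 1 (n / 2) := Finset.sdiff_subset
  have hcompl := compl_circulant (n := n) S
  -- (1) → (2)
  have h12 : ((circulant n S)ᶜ.Connected ∧
      (¬ ∃ A : Finset (ZMod n), A.card = 3 ∧
        ∀ u ∈ A, ∀ v ∈ A, ¬ (circulant n S).Adj u v) ∧
      Nk n S 2 = n) →
      ∃ i : ℕ, Nat.gcd n i = 1 ∧ Finset.Icc 1 (n / 2) \ S = {i} := by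
    rintro ⟨hconn, -, hN2⟩
    have hc2 : (univ.filter fun x : ZMod n =>
        md n x ∈ Finset.Icc 1 (n / 2) \ S).card = 2 := by
      have h' := two_mul_N2' (n := n) S
      rw [hN2] at h'
      have h'' : n * 2 = n * (univ.filter fun x : ZMod n =>
          md n x ∈ Finset.Icc 1 (n / 2) \ S).card := by rw [← h']; ring
      exact (Nat.eq_of_mul_eq_mul_left (by omega : 0 < n) h'').symm
    obtain ⟨d, hDd, -⟩ := (c_eq_two_iff _ hDsub).mp hc2
    have hd := Finset.mem_Icc.mp (hDsub (hDd ▸ Finset.mem_singleton_self d))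
    rw [hcompl, hDd] at hconn
    exact ⟨d, gcd_of_connected d hd.1 hd.2 hconn, hDd⟩
  -- (2) → (1)
  have h21 : (∃ i : ℕ, Nat.gcd n i = 1 ∧ Finset.Icc 1 (n / 2) \ S = {i}) →
      ((circulant n S)ᶜ.Connected ∧
      (¬ ∃ A : Finset (ZMod n), A.card = 3 ∧
        ∀ u ∈ A, ∀ v ∈ A, ¬ (circulant n S).Adj u v) ∧
      Nk n S 2 = n) := by
    rintro ⟨i, hgcd, hDi⟩
    have hi := Finset.mem_Icc.mp (hDsub (hDi ▸ Finset.mem_singleton_self i))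
    have h2i : 2 * i ≠ n := by
      intro h
      have hdvd : i ∣ Nat.gcd n i := Nat.dvd_gcd ⟨2, by omega⟩ dvd_rfl
      have := Nat.le_of_dvd (by omega) hdvd
      omega
    have h3i : ¬ (n ∣ 3 * i) := by
      intro hdvd
      have : n ∣ 3 := (Nat.Coprime.dvd_of_dvd_mul_right hgcd hdvd)
      have := Nat.le_of_dvd (by omega) this
      omega
    obtain ⟨φ⟩ := iso_circulant_one i hi.1 hi.2 hgcd hn
    refine ⟨?_, ?_, ?_⟩
    · rw [hcompl, hDi]
      exact φ.connected_iff.mpr (connected_circulant_one hn)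
    · rintro ⟨A, hA3, hind⟩
      obtain ⟨a, b, c, hab, hac, hbc, rfl⟩ := Finset.card_eq_three.mp hA3
      have Hab : (circulant n S)ᶜ.Adj a b :=
        (SimpleGraph.compl_adj _ _ _).mpr ⟨hab, hind a (by simp) b (by simp)⟩
      have Hbc : (circulant n S)ᶜ.Adj b c :=
        (SimpleGraph.compl_adj _ _ _).mpr ⟨hbc, hind b (by simp) c (by simp)⟩
      have Hac : (circulant n S)ᶜ.Adj a c :=
        (SimpleGraph.compl_adj _ _ _).mpr ⟨hac, hind a (by simp) c (by simp)⟩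
      rw [hcompl, hDi] at Hab Hbc Hac
      exact no_triangle i hi.1 hi.2 h3i Hab Hbc Hac
    · have h' := two_mul_N2' (n := n) S
      have hc2 : (univ.filter fun x : ZMod n =>
          md n x ∈ Finset.Icc 1 (n / 2) \ S).card = 2 :=
        (c_eq_two_iff _ hDsub).mpr ⟨i, hDi, h2i⟩
      rw [hc2] at h'
      omega
  -- (2) → (3)
  have h23 : (∃ i : ℕ, Nat.gcd n i = 1 ∧ Finset.Icc 1 (n / 2) \ S = {i}) →
      Nonempty ((circulant n S)ᶜ ≃g circulant n ({1} : Finset ℕ)) := by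
    rintro ⟨i, hgcd, hDi⟩
    have hi := Finset.mem_Icc.mp (hDsub (hDi ▸ Finset.mem_singleton_self i))
    rw [hcompl, hDi]
    exact iso_circulant_one i hi.1 hi.2 hgcd hn
  -- (3) → (1)
  have h31 : Nonempty ((circulant n S)ᶜ ≃g circulant n ({1} : Finset ℕ)) →
      ((circulant n S)ᶜ.Connected ∧
      (¬ ∃ A : Finset (ZMod n), A.card = 3 ∧
        ∀ u ∈ A, ∀ v ∈ A, ¬ (circulant n S).Adj u v) ∧
      Nk n S 2 = n) := by
    rintro ⟨φ⟩
    have h3one : ¬ (n ∣ 3 * 1) := by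
      intro hdvd
      have := Nat.le_of_dvd (by omega) hdvd
      omega
    refine ⟨?_, ?_, ?_⟩
    · exact φ.connected_iff.mpr (connected_circulant_one hn)
    · rintro ⟨A, hA3, hind⟩
      obtain ⟨a, b, c, hab, hac, hbc, rfl⟩ := Finset.card_eq_three.mp hA3
      have Hab : (circulant n S)ᶜ.Adj a b :=
        (SimpleGraph.compl_adj _ _ _).mpr ⟨hab, hind a (by simp) b (by simp)⟩
      have Hbc : (circulant n S)ᶜ.Adj b c :=
        (SimpleGraph.compl_adj _ _ _).mpr ⟨hbc, hind b (by simp) c (by simp)⟩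
      have Hac : (circulant n S)ᶜ.Adj a c :=
        (SimpleGraph.compl_adj _ _ _).mpr ⟨hac, hind a (by simp) c (by simp)⟩
      exact no_triangle 1 le_rfl (by omega) h3one
        (φ.map_rel_iff.mpr Hab) (φ.map_rel_iff.mpr Hbc) (φ.map_rel_iff.mpr Hac)
    · have h' := two_mul_N2 (n := n) S
      have hiso := card_pairs_iso φ
      have hone : (univ.filter fun p : ZMod n × ZMod n =>
          (circulant n ({1} : Finset ℕ)).Adj p.1 p.2).card = n * 2 := by
        rw [card_pairs_circ ({1} : Finset ℕ)
          (by intro x hx; simp only [Finset.mem_singleton] at hx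
              subst hx; simp only [Finset.mem_Icc]; omega)]
        congr 1
        exact (c_eq_two_iff ({1} : Finset ℕ)
          (by intro x hx; simp only [Finset.mem_singleton] at hx
              subst hx; simp only [Finset.mem_Icc]; omega)).mpr ⟨1, rfl, by omega⟩
      rw [hiso, hone] at h'
      omega
  exact ⟨⟨h12, h21⟩, ⟨fun h => h23 (h12 h), h31⟩⟩
end
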